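/- Let X be a Hilbert space, Xₙ ⊆ X closed subspaces with orthogonal projections pₙ satisfying pₙ x → x for all x ∈ X. Let X' be a Banach space compactly embedded in X, and suppose Tₙ : Xₙ → Xₙ are operators with Tₙ Xₙ ⊆ X' and the X'-norms ‖Tₙ xₙ‖_{X'} uniformly bounded whenever ‖xₙ‖_X ≤ C, and Tₙ converges discretely to T : X → X. Then Tₙ converges compactly to T. -/

import Mathlib

open Filter Topology

/-- Lemma 3.3: If `Tₙ Xₙ ⊆ X'` with `X'` compactly embedded in `X` (via `i`),
the `X'`-norms of `Tₙ xₙ` are uniformly bounded for bounded sequences `xₙ ∈ Xₙ`, and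
`Tₙ → T` discretely, then `Tₙ → T` compactly. -/
theorem discrete_convergence_and_compact_embedding_implies_compact_convergence
    {X : Type*} [NormedAddCommGroup X] [InnerProductSpace ℂ X] [CompleteSpace X]
    {X' : Type*} [NormedAddCommGroup X'] [NormedSpace ℂ X'] [CompleteSpace X']
    (K : ℕ → Submodule ℂ X) [∀ n, Submodule.HasOrthogonalProjection (K n)]
    (happrox : ∀ x : X,
      Tendsto (fun n => ‖((Submodule.orthogonalProjectionOnto (K n) x : K n) : X) - x‖) atTop (𝓝 0))
    (i : X' →L[ℂ] X) (hi : IsCompactOperator i)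
    (T : X →L[ℂ] X) (Tn : ∀ n, (K n) →L[ℂ] (K n))
    -- `Tₙ Xₙ ⊆ X'` with uniform `X'`-bound on bounded sequences:
    (hrange : ∀ (x : ∀ n, K n) (C : ℝ), (∀ n, ‖(x n : X)‖ ≤ C) →
      ∃ (g : ℕ → X') (C' : ℝ), (∀ n, ((Tn n (x n) : K n) : X) = i (g n)) ∧ ∀ n, ‖g n‖ ≤ C')
    -- discrete convergence `Tₙ → T`:
    (hdisc : ∀ (x₀ : X) (x : ∀ n, K n),
      Tendsto (fun n => ‖(x n : X) - ((Submodule.orthogonalProjectionOnto (K n) x₀ : K n) : X)‖) atTop (𝓝 0) →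
      Tendsto (fun n => ‖((Tn n (x n) : K n) : X) -
        ((Submodule.orthogonalProjectionOnto (K n) (T x₀) : K n) : X)‖) atTop (𝓝 0)) :
    -- compact convergence: discrete convergence together with discrete P-compactness of images
    (∀ (x₀ : X) (x : ∀ n, K n),
      Tendsto (fun n => ‖(x n : X) - ((Submodule.orthogonalProjectionOnto (K n) x₀ : K n) : X)‖) atTop (𝓝 0) →
      Tendsto (fun n => ‖((Tn n (x n) : K n) : X) -
        ((Submodule.orthogonalProjectionOnto (K n) (T x₀) : K n) : X)‖) atTop (𝓝 0)) ∧
    (∀ (x : ∀ n, K n) (C : ℝ), (∀ n, ‖(x n : X)‖ ≤ C) →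
      ∀ φ : ℕ → ℕ, StrictMono φ →
      ∃ (ψ : ℕ → ℕ) (y : X), StrictMono ψ ∧
        Tendsto (fun k => ‖((Tn (φ (ψ k)) (x (φ (ψ k))) : K (φ (ψ k))) : X) -
          ((Submodule.orthogonalProjectionOnto (K (φ (ψ k))) y : K (φ (ψ k))) : X)‖) atTop (𝓝 0)) := by
  refine ⟨hdisc, ?_⟩
  intro x C hC φ hφ
  obtain ⟨g, C', hg, hgC⟩ := hrange x C hC
  have hcpt : IsCompact (closure (⇑i '' Metric.closedBall (0 : X') C')) :=
    hi.isCompact_closure_image_closedBall C'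
  have hmem : ∀ k, i (g (φ k)) ∈ closure (⇑i '' Metric.closedBall (0 : X') C') :=
    fun k => subset_closure ⟨g (φ k), by simpa using hgC (φ k), rfl⟩
  obtain ⟨y, -, ψ, hψ, hconv⟩ := hcpt.tendsto_subseq hmem
  refine ⟨ψ, y, hψ, ?_⟩
  have h1 : Tendsto (fun k => ‖i (g (φ (ψ k))) - y‖) atTop (𝓝 0) := by
    have := hconv.sub (tendsto_const_nhds (x := y))
    exact (tendsto_norm_zero.comp (by simpa using this))
  have h2 : Tendsto (fun k =>
      ‖((Submodule.orthogonalProjectionOnto (K (φ (ψ k))) y : K (φ (ψ k))) : X) - y‖) atTop (𝓝 0) :=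
    (happrox y).comp ((hφ.comp hψ).tendsto_atTop)
  have hsum : Tendsto (fun k => ‖i (g (φ (ψ k))) - y‖ +
      ‖((Submodule.orthogonalProjectionOnto (K (φ (ψ k))) y : K (φ (ψ k))) : X) - y‖) atTop (𝓝 0) := by
    simpa using h1.add h2
  refine squeeze_zero (fun k => norm_nonneg _) (fun k => ?_) hsum
  rw [hg (φ (ψ k))]
  have heq : i (g (φ (ψ k))) - ((Submodule.orthogonalProjectionOnto (K (φ (ψ k))) y : K (φ (ψ k))) : X)
      = (i (g (φ (ψ k))) - y) +
        (y - ((Submodule.orthogonalProjectionOnto (K (φ (ψ k))) y : K (φ (ψ k))) : X)) := by abel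
  rw [heq]
  refine (norm_add_le _ _).trans ?_
  rw [norm_sub_rev y]
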